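/- Let V be a finite type with Fintype.card V = n and E : V → V → Prop a relation with no directed cycles (¬ Relation.TransGen E v v for every v). Suppose the longest directed path in (V,E) has length ℓ with ℓ ≥ 1 (there exists a directed path of length ℓ and no directed path of length ℓ+1). If E is strongly reduced, then the number of edges of (V,E) is at most t(n−ℓ+1, 2) + T(n, ℓ, 1), where t(m, 2) is the number of edges of SimpleGraph.turanGraph m 2 and T(n, ℓ, 1) := C(n, 2) − C(n−ℓ+1, 2). -/

import Mathlib

/-- A directed path of length `k` in `(V, E)`: a map `p : Fin (k+1) → V` with
`E (p i) (p (i+1))` for all `i < k`. -/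
def IsDirPath {V : Type*} (E : V → V → Prop) (k : ℕ) (p : Fin (k + 1) → V) : Prop :=
  ∀ i : Fin k, E (p i.castSucc) (p i.succ)

/-- A directed path of length `k` from `v` to `w`. -/
def IsDirPathFromTo {V : Type*} (E : V → V → Prop) (k : ℕ) (p : Fin (k + 1) → V)
    (v w : V) : Prop :=
  p 0 = v ∧ p (Fin.last k) = w ∧ IsDirPath E k p

/-- A topological order of `(V, E)`: an injective map `f : V → ℕ` with `f u < f v`
whenever `E u v`. -/
def IsTopologicalOrder {V : Type*} (E : V → V → Prop) (f : V → ℕ) : Prop :=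
  Function.Injective f ∧ ∀ u v : V, E u v → f u < f v

/-- `L` is the list of the elements of `S`, sorted in strictly increasing order of `f`. -/
def IsSortedListOf {V : Type*} (f : V → ℕ) (S : Set V) (L : List V) : Prop :=
  (∀ x : V, x ∈ L ↔ x ∈ S) ∧ L.Pairwise fun x y => f x < f y

/-- The list `L` is a directed path from `v` to `w`: its first element is `v`, its last
element is `w`, and consecutive elements are related by `E`. -/
def IsDirPathList {V : Type*} (E : V → V → Prop) (v w : V) (L : List V) : Prop :=
  L.head? = some v ∧ L.getLast? = some w ∧ L.Chain' E

/-- `E` is strongly reduced: for every topological order `f`, every pair of vertices `v, w`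
and every two directed paths `γ, γ'` from `v` to `w`, the list of vertices of the union of
the vertex sets of `γ` and `γ'`, sorted in strictly increasing order of `f`, is a directed
path from `v` to `w`. -/
def StronglyReduced {V : Type*} (E : V → V → Prop) : Prop :=
  ∀ f : V → ℕ, IsTopologicalOrder E f →
    ∀ (v w : V) (k k' : ℕ) (γ : Fin (k + 1) → V) (γ' : Fin (k' + 1) → V),
      IsDirPathFromTo E k γ v w → IsDirPathFromTo E k' γ' v w →
        ∀ L : List V, IsSortedListOf f (Set.range γ ∪ Set.range γ') L →
          IsDirPathList E v w L

/-- The number of edges of `(V, E)`: the cardinality of the finset of pairs `(u, v)`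
with `E u v`. -/
noncomputable def edgeCount {V : Type*} [Fintype V] (E : V → V → Prop) : ℕ :=
  letI := Classical.decPred fun p : V × V => E p.1 p.2
  (Finset.univ.filter fun p : V × V => E p.1 p.2).card

/-- `t(n, r)`: the number of edges of the Turán graph `SimpleGraph.turanGraph n r`. -/
def turanEdges (n r : ℕ) : ℕ :=
  (SimpleGraph.turanGraph n r).edgeFinset.card

/-- `T(n, ℓ, 1) = C(n, 2) - C(n - ℓ + 1, 2)` (truncated subtraction in `ℕ`). -/
def intervalTuran (n ℓ : ℕ) : ℕ := Nat.choose n 2 - Nat.choose (n - ℓ + 1) 2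


open Relation

/-! ### Arithmetic helpers -/

/-- `srQ k = C(⌈k/2⌉,2) + C(⌊k/2⌋,2)`, the number of non-edges of the bipartite Turán graph. -/
def srQ (k : ℕ) : ℕ := Nat.choose (k / 2) 2 + Nat.choose ((k + 1) / 2) 2

/-- `srT k = ⌊k²/4⌋` as a product. -/
def srT (k : ℕ) : ℕ := (k / 2) * ((k + 1) / 2)

lemma srChooseSucc (a : ℕ) : (a + 1).choose 2 = a + a.choose 2 := by
  rw [Nat.choose_succ_succ, Nat.choose_one_right]

lemma srQ_step (k : ℕ) : srQ (k + 1) = srQ k + k / 2 := by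
  rcases Nat.even_or_odd k with ⟨a, ha⟩ | ⟨a, ha⟩
  · subst ha
    have h1 : (a + a) / 2 = a := by omega
    have h2 : (a + a + 1) / 2 = a := by omega
    have h3 : (a + a + 1 + 1) / 2 = a + 1 := by omega
    simp only [srQ, h1, h2, h3]
    have := srChooseSucc a
    omega
  · subst ha
    have h1 : (2 * a + 1) / 2 = a := by omega
    have h2 : (2 * a + 1 + 1) / 2 = a + 1 := by omega
    have h3 : (2 * a + 1 + 1 + 1) / 2 = a + 1 := by omega
    simp only [srQ, h1, h2, h3]
    have := srChooseSucc a
    omega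

lemma srQ_mono {a b : ℕ} (h : a ≤ b) : srQ a ≤ srQ b := by
  induction b, h using Nat.le_induction with
  | base => exact le_refl _
  | succ b hb ih =>
    have := srQ_step b
    omega

lemma srQ_le_choose (n : ℕ) : srQ (n + 1) ≤ n.choose 2 := by
  induction n with
  | zero => decide
  | succ m ih =>
    have h1 := srQ_step (m + 1)
    have h2 := srChooseSucc m
    omega

lemma srQ_add_srT (k : ℕ) : srQ k + srT k = k.choose 2 := by
  induction k with
  | zero => decide
  | succ m ih =>
    have h1 := srQ_step m
    have h2 := srChooseSucc m
    have h3 : srT (m + 1) = srT m + (m - m / 2) := by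
      rcases Nat.even_or_odd m with ⟨a, ha⟩ | ⟨a, ha⟩
      · subst ha
        have e1 : (a + a) / 2 = a := by omega
        have e2 : (a + a + 1) / 2 = a := by omega
        have e3 : (a + a + 1 + 1) / 2 = a + 1 := by omega
        simp only [srT, e1, e2, e3]
        have : a * (a + 1) = a * a + a := by ring
        omega
      · subst ha
        have e1 : (2 * a + 1) / 2 = a := by omega
        have e2 : (2 * a + 1 + 1) / 2 = a + 1 := by omega
        have e3 : (2 * a + 1 + 1 + 1) / 2 = a + 1 := by omega
        simp only [srT, e1, e2, e3]
        have : (a + 1) * (a + 1) = a * (a + 1) + (a + 1) := by ring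
        omega
    omega

lemma srChooseTwo (n : ℕ) : 2 * n.choose 2 = n * (n - 1) := by
  induction n with
  | zero => decide
  | succ m ih =>
    have h1 := srChooseSucc m
    have h2 : (m + 1) * (m + 1 - 1) = m * (m - 1) + 2 * m := by
      cases m with
      | zero => decide
      | succ a =>
        have : (a + 1 + 1) * (a + 1) = (a + 1) * a + 2 * (a + 1) := by ring
        simpa using this
    omega

/-! ### List path helpers -/

section Lists

variable {V : Type*} {E : V → V → Prop}

lemma srHeadMem {L : List V} {x : V} (h : L.head? = some x) : x ∈ L := by
  cases L with
  | nil => simp at h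
  | cons a t =>
    simp only [List.head?_cons, Option.some.injEq] at h
    subst h; exact List.mem_cons_self

lemma srGetLastMem {L : List V} {x : V} (h : L.getLast? = some x) : x ∈ L := by
  have hx : x ∈ L.getLast? := by rw [h]; rfl
  obtain ⟨hne, rfl⟩ := List.mem_getLast?_eq_getLast hx
  exact List.getLast_mem hne

lemma srComparable {L : List V} (h : L.Chain' E) {x y : V}
    (hx : x ∈ L) (hy : y ∈ L) (hxy : x ≠ y) :
    TransGen E x y ∨ TransGen E y x := by
  haveI : IsTrans V (TransGen E) := ⟨fun _ _ _ h1 h2 => h1.trans h2⟩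
  have hp : L.Pairwise (TransGen E) :=
    List.isChain_iff_pairwise.mp (h.imp fun _ _ hab => TransGen.single hab)
  obtain ⟨i, hi⟩ := List.mem_iff_get.mp hx
  obtain ⟨j, hj⟩ := List.mem_iff_get.mp hy
  have hij : i ≠ j := by rintro rfl; exact hxy (hi.symm.trans hj)
  rcases lt_or_gt_of_ne hij with hlt | hlt
  · exact Or.inl (hi ▸ hj ▸ List.pairwise_iff_get.mp hp i j hlt)
  · exact Or.inr (hi ▸ hj ▸ List.pairwise_iff_get.mp hp j i hlt)

lemma srNodup (hacyc : ∀ v : V, ¬TransGen E v v) {L : List V} (h : L.Chain' E) :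
    L.Nodup := by
  haveI : IsTrans V (TransGen E) := ⟨fun _ _ _ h1 h2 => h1.trans h2⟩
  have hp : L.Pairwise (TransGen E) :=
    List.isChain_iff_pairwise.mp (h.imp fun _ _ hab => TransGen.single hab)
  exact hp.imp fun {a b} hab => by rintro rfl; exact hacyc a hab

lemma srPathOfTransGen {a b : V} (h : TransGen E a b) :
    ∃ L : List V, L.Chain' E ∧ L.head? = some a ∧ L.getLast? = some b := by
  induction h with
  | @single c hac => exact ⟨[a, c], List.isChain_pair.mpr hac, rfl, rfl⟩
  | @tail b c _ hcd ih =>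
    obtain ⟨L, h1, h2, h3⟩ := ih
    have hne : L ≠ [] := by rintro rfl; simp at h2
    refine ⟨L ++ [c], ?_, ?_, ?_⟩
    · refine List.isChain_append.mpr ?_
      refine ⟨h1, List.isChain_singleton _, ?_⟩
      intro x hx y hy
      rw [h3] at hx
      simp only [List.head?_cons, Option.mem_def, Option.some.injEq] at hx hy
      subst hx; subst hy; exact hcd
    · rw [List.head?_append_of_ne_nil _ hne]; exact h2
    · rw [List.getLast?_append_of_ne_nil _ (by simp)]; rfl

lemma srPathAppend {L M : List V} {a x : V}
    (hL : L.Chain' E) (hL1 : L.head? = some a) (hL2 : L.getLast? = some x)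
    (hM : M.Chain' E) (hM1 : M.head? = some x) :
    ∃ P : List V, P.Chain' E ∧ P.head? = some a ∧ P.getLast? = M.getLast? ∧
      (∀ z ∈ L, z ∈ P) ∧ (∀ z ∈ M, z ∈ P) := by
  cases M with
  | nil => simp at hM1
  | cons m t =>
    have hmx : x = m := by simpa using hM1.symm
    subst hmx
    have hLne : L ≠ [] := by rintro rfl; simp at hL1
    have hxL : x ∈ L := srGetLastMem hL2
    have hchain_t : t.Chain' E := (List.isChain_cons.mp hM).2
    by_cases ht : t = []
    · subst ht
      refine ⟨L, hL, hL1, ?_, fun z hz => hz, ?_⟩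
      · rw [hL2]; rfl
      · intro z hz
        simp only [List.mem_singleton] at hz
        subst hz; exact hxL
    · refine ⟨L ++ t, ?_, ?_, ?_, ?_, ?_⟩
      · refine List.isChain_append.mpr ?_
        refine ⟨hL, hchain_t, fun z hz y hy => ?_⟩
        rw [hL2] at hz
        simp only [Option.mem_def, Option.some.injEq] at hz
        subst hz
        exact (List.isChain_cons.mp hM).1 y hy
      · rw [List.head?_append_of_ne_nil _ hLne]; exact hL1
      · rw [List.getLast?_append_of_ne_nil _ ht]
        rw [show x :: t = [x] ++ t from rfl, List.getLast?_append_of_ne_nil _ ht]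
      · intro z hz; exact List.mem_append_left _ hz
      · intro z hz
        rcases List.mem_cons.mp hz with rfl | hz
        · exact List.mem_append_left _ hxL
        · exact List.mem_append_right _ hz

lemma srPathOfChain : ∀ (L : List V), L.Chain' (TransGen E) → L ≠ [] →
    ∃ P : List V, P.Chain' E ∧ P.head? = L.head? ∧ P.getLast? = L.getLast? ∧
      ∀ z ∈ L, z ∈ P := by
  intro L
  induction L with
  | nil => intro _ h; exact absurd rfl h
  | cons a L ih =>
    intro hch _
    cases L with
    | nil =>
      exact ⟨[a], List.isChain_singleton a, rfl, rfl, by simp⟩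
    | cons b t =>
      have hab : TransGen E a b := (List.isChain_cons_cons.mp hch).1
      obtain ⟨P', h1, h2, h3, h4⟩ := ih (List.isChain_cons_cons.mp hch).2 (by simp)
      obtain ⟨L1, g1, g2, g3⟩ := srPathOfTransGen hab
      have h2' : P'.head? = some b := by rw [h2]; rfl
      obtain ⟨P, p1, p2, p3, p4, p5⟩ := srPathAppend g1 g2 g3 h1 h2'
      refine ⟨P, p1, by rw [p2]; rfl, ?_, ?_⟩
      · rw [p3, h3, List.getLast?_cons_cons]
      · intro z hz
        rcases List.mem_cons.mp hz with rfl | hz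
        · exact p4 z (srHeadMem g2)
        · exact p5 z (h4 z hz)

end Lists

section Paths

variable {V : Type*} {E : V → V → Prop}

lemma srFinPath {P : List V} {a b : V} (h : P.Chain' E) (h1 : P.head? = some a)
    (h2 : P.getLast? = some b) :
    ∃ (k : ℕ) (γ : Fin (k + 1) → V), IsDirPathFromTo E k γ a b ∧
      Set.range γ = {z | z ∈ P} := by
  have hne : P ≠ [] := by rintro rfl; simp at h1
  have hpos : 0 < P.length := List.length_pos_iff.mpr hne
  refine ⟨P.length - 1, fun i => P.get ⟨i.val, by have := i.isLt; omega⟩, ⟨?_, ?_, ?_⟩, ?_⟩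
  · show P.get ⟨(0 : Fin (P.length - 1 + 1)).val, _⟩ = a
    simp only [List.get_eq_getElem, Fin.val_zero]
    rw [← List.head_eq_getElem_zero hne]
    rw [List.head?_eq_head hne] at h1
    exact Option.some.inj h1
  · show P.get ⟨(Fin.last (P.length - 1)).val, _⟩ = b
    simp only [List.get_eq_getElem, Fin.val_last]
    rw [List.getLast?_eq_getLast_of_ne_nil hne] at h2
    rw [← Option.some.inj h2, List.getLast_eq_getElem]
  · intro i
    have hi : (i : ℕ) < P.length - 1 := by have := i.isLt; omega
    have hh := List.isChain_iff_getElem.mp h i (by omega)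
    simpa using hh
  · ext z
    simp only [Set.mem_range, Set.mem_setOf_eq]
    constructor
    · rintro ⟨i, rfl⟩; exact List.get_mem _ _
    · intro hz
      obtain ⟨i, hi, hiz⟩ := List.mem_iff_getElem.mp hz
      exact ⟨⟨i, by omega⟩, by simpa [List.get_eq_getElem] using hiz⟩

lemma srChainLen [Fintype V] (hacyc : ∀ v : V, ¬TransGen E v v) {ℓ : ℕ}
    (hmax : ¬∃ p : Fin (ℓ + 1 + 1) → V, IsDirPath E (ℓ + 1) p) :
    ∀ L : List V, L.Chain' (TransGen E) → L.length ≤ ℓ + 1 := by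
  classical
  intro L hL
  by_contra hlen
  push_neg at hlen
  have hne : L ≠ [] := by rintro rfl; simp at hlen
  obtain ⟨P, h1, _, _, h4⟩ := srPathOfChain L hL hne
  have hLnd : L.Nodup := by
    haveI : IsTrans V (TransGen E) := ⟨fun _ _ _ p q => p.trans q⟩
    exact (List.isChain_iff_pairwise.mp hL).imp fun {a b} hab => by
      rintro rfl; exact hacyc a hab
  have hPnd : P.Nodup := srNodup hacyc h1
  have hlenP : ℓ + 2 ≤ P.length := by
    have hsub : L.toFinset ⊆ P.toFinset := fun z hz =>
      List.mem_toFinset.mpr (h4 z (List.mem_toFinset.mp hz))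
    have hcard := Finset.card_le_card hsub
    rw [List.toFinset_card_of_nodup hLnd, List.toFinset_card_of_nodup hPnd] at hcard
    omega
  set P' := P.take (ℓ + 2) with hP'
  have hc : P'.Chain' E := h1.take _
  have hlen' : P'.length = ℓ + 2 := by rw [hP', List.length_take]; omega
  apply hmax
  refine ⟨fun i => P'.get ⟨i.val, by have := i.isLt; omega⟩, ?_⟩
  intro i
  have hi : (i : ℕ) < P'.length - 1 := by have := i.isLt; omega
  have hh := List.isChain_iff_getElem.mp hc i (by omega)
  simpa using hh

lemma srTopo [Fintype V] (hacyc : ∀ v : V, ¬TransGen E v v) :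
    ∃ f : V → ℕ, IsTopologicalOrder E f := by
  classical
  letI po : PartialOrder V :=
    { le := fun x y => x = y ∨ TransGen E x y
      le_refl := fun x => Or.inl rfl
      le_trans := by
        rintro a b c (rfl | h1) (rfl | h2)
        · exact Or.inl rfl
        · exact Or.inr h2
        · exact Or.inr h1
        · exact Or.inr (h1.trans h2)
      le_antisymm := by
        rintro a b h1 h2
        rcases h1 with rfl | h1
        · rfl
        · rcases h2 with rfl | h2
          · rfl
          · exact absurd (h1.trans h2) (hacyc a) }
  letI : Fintype (LinearExtension V) := ‹Fintype V›
  set g : V → LinearExtension V := fun v => toLinearExtension v with hg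
  have hginj : Function.Injective g := fun u v h => h
  have hgmono : ∀ u v : V, TransGen E u v → g u < g v := by
    intro u v huv
    have hne : u ≠ v := by rintro rfl; exact hacyc u huv
    have hle : g u ≤ g v := toLinearExtension.monotone (Or.inr huv)
    exact lt_of_le_of_ne hle fun hh => hne (hginj hh)
  set f : V → ℕ := fun v => (Finset.univ.filter fun u : V => g u < g v).card with hf
  have hmono : ∀ u v : V, g u < g v → f u < f v := by
    intro u v huv
    have hsub : (Finset.univ.filter fun w : V => g w < g u) ⊆
        (Finset.univ.filter fun w : V => g w < g v) := by
      intro w hw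
      simp only [Finset.mem_filter, Finset.mem_univ, true_and] at hw ⊢
      exact hw.trans huv
    apply Finset.card_lt_card
    rw [Finset.ssubset_iff_of_subset hsub]
    exact ⟨u, by simp [huv], by simp⟩
  refine ⟨f, ?_, fun u v huv => hmono u v (hgmono u v (TransGen.single huv))⟩
  intro u v huv
  by_contra hne
  have hgne : g u ≠ g v := fun h => hne (hginj h)
  rcases hgne.lt_or_gt with h | h
  · exact absurd huv (Nat.ne_of_lt (hmono _ _ h))
  · exact absurd huv.symm (Nat.ne_of_lt (hmono _ _ h))

lemma srDiamond [Fintype V] (hacyc : ∀ v : V, ¬TransGen E v v) (hsr : StronglyReduced E)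
    {a b x y : V} (hax : TransGen E a x) (hxb : TransGen E x b)
    (hay : TransGen E a y) (hyb : TransGen E y b) :
    x = y ∨ TransGen E x y ∨ TransGen E y x := by
  classical
  by_cases hxy : x = y
  · exact Or.inl hxy
  refine Or.inr ?_
  obtain ⟨f, hftopo⟩ := srTopo hacyc
  obtain ⟨L1, a1, a2, a3⟩ := srPathOfTransGen hax
  obtain ⟨L2, b1, b2, b3⟩ := srPathOfTransGen hxb
  obtain ⟨P, p1, p2, p3, p4, _⟩ := srPathAppend a1 a2 a3 b1 b2
  obtain ⟨M1, c1, c2, c3⟩ := srPathOfTransGen hay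
  obtain ⟨M2, d1, d2, d3⟩ := srPathOfTransGen hyb
  obtain ⟨P', q1, q2, q3, q4, _⟩ := srPathAppend c1 c2 c3 d1 d2
  have hxP : x ∈ P := p4 x (srGetLastMem a3)
  have hyP' : y ∈ P' := q4 y (srGetLastMem c3)
  obtain ⟨k, γ, hγ, hγr⟩ := srFinPath p1 p2 (p3.trans b3)
  obtain ⟨k', γ', hγ', hγr'⟩ := srFinPath q1 q2 (q3.trans d3)
  set S : Set V := Set.range γ ∪ Set.range γ' with hS
  set rle : V → V → Prop := fun u v => f u ≤ f v with hrle
  haveI hdec : DecidableRel rle := fun u v => Nat.decLe _ _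
  haveI : IsTrans V rle := ⟨fun u v w h1 h2 => le_trans h1 h2⟩
  haveI : IsTotal V rle := ⟨fun u v => le_total _ _⟩
  haveI : IsAntisymm V rle := ⟨fun u v h1 h2 => hftopo.1 (le_antisymm h1 h2)⟩
  set F : Finset V := Finset.univ.filter fun z => z ∈ S with hF
  set L := F.sort rle with hLdef
  have hmem : ∀ z, z ∈ L ↔ z ∈ S := by
    intro z
    rw [hLdef, Finset.mem_sort, hF]
    simp
  have hsorted : IsSortedListOf f S L := by
    refine ⟨hmem, ?_⟩
    have h1 := Finset.pairwise_sort (r := rle) (s := F)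
    have h2 := Finset.sort_nodup (r := rle) (s := F)
    rw [List.pairwise_iff_get]
    intro i j hij
    have hle := List.pairwise_iff_get.mp h1 i j hij
    have hne := List.pairwise_iff_get.mp h2 i j hij
    exact lt_of_le_of_ne hle fun hh => hne (hftopo.1 hh)
  have hpathL := hsr f hftopo a b k k' γ γ' hγ hγ' L hsorted
  have hx : x ∈ L := (hmem x).mpr (Or.inl (by rw [hγr]; exact hxP))
  have hy : y ∈ L := (hmem y).mpr (Or.inr (by rw [hγr']; exact hyP'))
  exact srComparable hpathL.2.2 hx hy hxy

end Paths

/-! ### Abstract poset counting -/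

section Poset

lemma srMulPred (n : ℕ) : n * (n - 1) = n * n - n := by
  cases n with
  | zero => rfl
  | succ m =>
    simp only [Nat.add_sub_cancel]
    have : (m + 1) * (m + 1) = (m + 1) * m + (m + 1) := by ring
    omega

lemma srAsym {V : Type*} [Fintype V] (r : V → V → Prop) [DecidableRel r]
    (hirr : ∀ v, ¬r v v) (hasymm : ∀ u v, r u v → ¬r v u) :
    (Finset.univ.filter fun p : V × V => r p.1 p.2).card ≤ (Fintype.card V).choose 2 := by
  classical
  set S := Finset.univ.filter fun p : V × V => r p.1 p.2 with hS
  have hdisj : Disjoint S (S.image Prod.swap) := by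
    rw [Finset.disjoint_left]
    intro p hp hp'
    rw [Finset.mem_image] at hp'
    obtain ⟨q, hq, hqp⟩ := hp'
    rw [hS, Finset.mem_filter] at hp hq
    have h1 : r p.1 p.2 := hp.2
    have h2 : r p.2 p.1 := by
      have : q.1 = p.2 ∧ q.2 = p.1 := by
        constructor
        · rw [← hqp]; rfl
        · rw [← hqp]; rfl
      rw [← this.1, ← this.2]; exact hq.2
    exact hasymm _ _ h1 h2
  have himg : (S.image Prod.swap).card = S.card :=
    Finset.card_image_of_injective _ Prod.swap_injective
  have hsub : S ∪ S.image Prod.swap ⊆ (Finset.univ : Finset V).offDiag := by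
    intro p hp
    rw [Finset.mem_union] at hp
    rw [Finset.mem_offDiag]
    refine ⟨Finset.mem_univ _, Finset.mem_univ _, ?_⟩
    rcases hp with hp | hp
    · rw [hS, Finset.mem_filter] at hp
      rintro he
      rw [he] at hp
      exact hirr _ hp.2
    · rw [Finset.mem_image] at hp
      obtain ⟨q, hq, hqp⟩ := hp
      rw [hS, Finset.mem_filter] at hq
      rintro he
      have h1 : q.2 = p.1 := by rw [← hqp]; rfl
      have h2 : q.1 = p.2 := by rw [← hqp]; rfl
      rw [he] at h1
      rw [← h1] at h2
      rw [h2] at hq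
      exact hirr _ hq.2
  have hcard := Finset.card_le_card hsub
  rw [Finset.card_union_of_disjoint hdisj, himg] at hcard
  rw [Finset.offDiag_card, Finset.card_univ] at hcard
  have h2 := srChooseTwo (Fintype.card V)
  have hNN := srMulPred (Fintype.card V)
  omega

lemma srChainOfPairwise {V : Type*} {r : V → V → Prop} (f : V → ℕ)
    (hmono : ∀ u v, r u v → f u < f v) :
    ∀ (n : ℕ) (S : Finset V), S.card = n → (∀ x ∈ S, ∀ y ∈ S, x ≠ y → r x y ∨ r y x) →
    ∃ L : List V, L.Chain' r ∧ L.length = S.card ∧ ∀ z ∈ L, z ∈ S := by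
  classical
  intro n
  induction n using Nat.strong_induction_on with
  | _ n IH =>
    intro S hcard hS
    rcases S.eq_empty_or_nonempty with rfl | hne
    · exact ⟨[], List.isChain_nil, by simp, by simp⟩
    · obtain ⟨x, hxS, hxmin⟩ := Finset.exists_min_image S f hne
      have hpos : 0 < S.card := Finset.card_pos.mpr hne
      obtain ⟨L, h1, h2, h3⟩ := IH (S.card - 1) (by omega) (S.erase x)
        (by rw [Finset.card_erase_of_mem hxS])
        (fun a ha b hb hab =>
          hS a (Finset.mem_of_mem_erase ha) b (Finset.mem_of_mem_erase hb) hab)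
      refine ⟨x :: L, ?_, ?_, ?_⟩
      · refine List.isChain_cons.mpr ?_
        refine ⟨?_, h1⟩
        intro y hy
        have hyL : y ∈ L := List.mem_of_mem_head? hy
        have hyS := h3 y hyL
        have hyx : y ≠ x := Finset.ne_of_mem_erase hyS
        rcases hS x hxS y (Finset.mem_of_mem_erase hyS) (Ne.symm hyx) with hh | hh
        · exact hh
        · have hlt := hmono y x hh
          have hge := hxmin y (Finset.mem_of_mem_erase hyS)
          omega
      · simp only [List.length_cons, h2, Finset.card_erase_of_mem hxS]
        omega
      · intro w hw
        rcases List.mem_cons.mp hw with rfl | hwL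
        · exact hxS
        · exact Finset.mem_of_mem_erase (h3 w hwL)

universe u

lemma srPoset : ∀ (N : ℕ) {V : Type u} [Fintype V] (r : V → V → Prop) [DecidableRel r]
    (f : V → ℕ),
    Fintype.card V = N →
    (∀ u v, r u v → f u < f v) →
    (∀ a b c, r a b → r b c → r a c) →
    (∀ a b u v, r a u → r a v → r u b → r v b → u = v ∨ r u v ∨ r v u) →
    ∀ h d : ℕ, (∀ L : List V, L.Chain' r → L.length ≤ h) → N = h + d →
    (Finset.univ.filter fun p : V × V => r p.1 p.2).card + srQ (d + 2) ≤ N.choose 2 := by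
  intro N
  induction N using Nat.strong_induction_on with
  | _ N IH =>
    intro V instV r instr f hcard hmono htrans hdia h d hchain hN
    classical
    haveI : IsTrans V r := ⟨fun a b c => htrans a b c⟩
    have hirr : ∀ v : V, ¬r v v := fun v hv => lt_irrefl _ (hmono v v hv)
    have hasymm : ∀ u v, r u v → ¬r v u := fun u v h1 h2 => hirr u (htrans u v u h1 h2)
    have hchainN : ∀ L : List V, L.Chain' r → L.length ≤ N := by
      intro L hL
      have hnd : L.Nodup := (List.isChain_iff_pairwise.mp hL).imp fun {a b} hab => by
        rintro rfl; exact hirr _ hab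
      calc L.length = L.toFinset.card := (List.toFinset_card_of_nodup hnd).symm
        _ ≤ Fintype.card V := Finset.card_le_univ _
        _ = N := hcard
    set cp := (Finset.univ.filter fun p : V × V => r p.1 p.2).card with hcp
    have hasymB : cp ≤ N.choose 2 := by
      rw [hcp, ← hcard]; exact srAsym r hirr hasymm
    set Pk : ℕ → Prop := fun k => ∃ L : List V, L.Chain' r ∧ L.length = k with hPk
    haveI : DecidablePred Pk := Classical.decPred _
    set h0 := Nat.findGreatest Pk N with hh0
    have hP0 : Pk 0 := ⟨[], List.isChain_nil, rfl⟩
    have hh0spec : Pk h0 := Nat.findGreatest_spec (Nat.zero_le N) hP0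
    have hh0max : ∀ k, h0 < k → ¬Pk k := by
      intro k hk hPkk
      have hle : k ≤ N := by
        obtain ⟨L, hL, hlen⟩ := hPkk
        exact hlen ▸ hchainN L hL
      exact Nat.findGreatest_is_greatest hk hle hPkk
    have hh0h : h0 ≤ h := by
      obtain ⟨L, hL, hlen⟩ := hh0spec
      have := hchain L hL
      omega
    have hh0N : h0 ≤ N := Nat.findGreatest_le N
    have hQle : srQ (d + 2) ≤ srQ (N - h0 + 2) := srQ_mono (by omega)
    suffices hgoal : cp + srQ ((N - h0) + 2) ≤ N.choose 2 by omega
    set d0 := N - h0 with hd0def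
    clear_value h0
    clear_value d0
    by_cases h00 : h0 = 0
    · have hVempty : ∀ v : V, False := by
        intro v
        exact hh0max 1 (by omega) ⟨[v], List.isChain_singleton v, rfl⟩
      have hN0 : N = 0 := by
        rw [← hcard]
        exact Fintype.card_eq_zero_iff.mpr ⟨fun v => (hVempty v).elim⟩
      have hd00 : d0 = 0 := by omega
      have hq : srQ (0 + 2) = 0 := by decide
      rw [hd00]
      omega
    by_cases h01 : h0 = 1
    · have hnor : ∀ u v : V, ¬r u v := by
        intro u v huv
        exact hh0max 2 (by omega) ⟨[u, v], List.isChain_pair.mpr huv, rfl⟩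
      have hcp0 : cp = 0 := by
        rw [hcp, Finset.card_eq_zero, Finset.filter_eq_empty_iff]
        intro p _
        exact hnor p.1 p.2
      have hQ := srQ_le_choose N
      have hd0N : d0 + 2 = N + 1 := by omega
      rw [hd0N]
      omega
    -- main case : h0 ≥ 2
    have hh02 : 2 ≤ h0 := by omega
    obtain ⟨L0, hL0c, hL0len⟩ := hh0spec
    have hL0ne : L0 ≠ [] := by
      intro hh
      rw [hh] at hL0len
      simp at hL0len
      omega
    set c0 := L0.head hL0ne with hc0
    set ct := L0.getLast hL0ne with hct
    have hc0min : ∀ z, ¬r z c0 := by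
      intro z hz
      apply hh0max (h0 + 1) (by omega)
      refine ⟨z :: L0, ?_, by simp [hL0len]⟩
      refine List.isChain_cons.mpr ?_
      refine ⟨?_, hL0c⟩
      intro y hy
      rw [List.head?_eq_head hL0ne] at hy
      simp only [Option.mem_def, Option.some.injEq] at hy
      subst hy
      exact hz
    have hctmax : ∀ z, ¬r ct z := by
      intro z hz
      apply hh0max (h0 + 1) (by omega)
      refine ⟨L0 ++ [z], ?_, by simp [hL0len]⟩
      refine List.isChain_append.mpr ?_
      refine ⟨hL0c, List.isChain_singleton _, ?_⟩
      intro u hu y hy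
      rw [List.getLast?_eq_getLast_of_ne_nil hL0ne] at hu
      simp only [Option.mem_def, Option.some.injEq, List.head?_cons] at hu hy
      subst hu; subst hy
      exact hz
    set U := Finset.univ.filter (fun z => r c0 z) with hU
    set Dn := Finset.univ.filter (fun z => r z ct) with hDn
    have hUD : (U ∩ Dn).card ≤ h0 - 2 := by
      by_contra hcon
      push_neg at hcon
      obtain ⟨T, hTsub, hTcard⟩ := Finset.exists_subset_card_eq (s := U ∩ Dn) (n := h0 - 1) (by omega)
      have memU : ∀ {w : V}, w ∈ U → r c0 w := by
        intro w hw
        rw [hU, Finset.mem_filter] at hw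
        exact hw.2
      have memD : ∀ {w : V}, w ∈ Dn → r w ct := by
        intro w hw
        rw [hDn, Finset.mem_filter] at hw
        exact hw.2
      have hTcomp : ∀ x ∈ T, ∀ y ∈ T, x ≠ y → r x y ∨ r y x := by
        intro x hx y hy hxy
        have hx' := Finset.mem_inter.mp (hTsub hx)
        have hy' := Finset.mem_inter.mp (hTsub hy)
        rcases hdia c0 ct x y (memU hx'.1) (memU hy'.1) (memD hx'.2) (memD hy'.2)
          with hh | hh | hh
        · exact absurd hh hxy
        · exact Or.inl hh
        · exact Or.inr hh
      obtain ⟨LT, hLTc, hLTlen, hLTmem⟩ := srChainOfPairwise f hmono T.card T rfl hTcomp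
      rw [hTcard] at hLTlen
      have hLTne : LT ≠ [] := by
        apply List.ne_nil_of_length_pos
        rw [hLTlen]
        omega
      apply hh0max (h0 + 1) (by omega)
      refine ⟨c0 :: (LT ++ [ct]), ?_, ?_⟩
      · refine List.isChain_cons.mpr ?_
        constructor
        · intro y hy
          rw [List.head?_append_of_ne_nil _ hLTne] at hy
          have hyL : y ∈ LT := List.mem_of_mem_head? hy
          exact memU (Finset.mem_inter.mp (hTsub (hLTmem y hyL))).1
        · refine List.isChain_append.mpr ?_
          refine ⟨hLTc, List.isChain_singleton _, ?_⟩
          intro u hu y hy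
          simp only [List.head?_cons, Option.mem_def, Option.some.injEq] at hy
          subst hy
          have huL : u ∈ LT := srGetLastMem hu
          exact memD (Finset.mem_inter.mp (hTsub (hLTmem u huL))).2
      · have hlen2 : (c0 :: (LT ++ [ct])).length = LT.length + 2 := by simp
        rw [hlen2, hLTlen]
        omega
    have hcontra : U.card ≤ (d0 + 2) / 2 + h0 - 2 ∨ Dn.card ≤ (d0 + 2) / 2 + h0 - 2 := by
      by_contra hcon
      push_neg at hcon
      have h1 := Finset.card_inter_add_card_union U Dn
      have h2 : (U ∪ Dn).card ≤ N := by
        rw [← hcard]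
        exact Finset.card_le_univ _
      omega
    have hdegc0 : (Finset.univ.filter fun y => r c0 y ∨ r y c0) = U := by
      rw [hU]
      apply Finset.filter_congr
      intro z _
      constructor
      · rintro (hh | hh)
        · exact hh
        · exact absurd hh (hc0min z)
      · exact Or.inl
    have hdegct : (Finset.univ.filter fun y => r ct y ∨ r y ct) = Dn := by
      rw [hDn]
      apply Finset.filter_congr
      intro z _
      constructor
      · rintro (hh | hh)
        · exact absurd hh (hctmax z)
        · exact hh
      · exact Or.inr
    have hallch : ∀ L : List V, L.Chain' r → L.length ≤ h0 := by
      intro L hL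
      by_contra hcon
      push_neg at hcon
      exact hh0max L.length hcon ⟨L, hL, rfl⟩
    have hremove : ∀ z : V, (Finset.univ.filter fun y => r z y ∨ r y z).card ≤
        (d0 + 2) / 2 + h0 - 2 → cp + srQ (d0 + 2) ≤ N.choose 2 := by
      intro z hdeg
      by_cases hd00 : d0 = 0
      · have hq : srQ (0 + 2) = 0 := by decide
        rw [hd00]
        omega
      · set V' := {v : V // v ≠ z} with hV'
        have hcard' : Fintype.card V' = N - 1 := by
          rw [← hcard]
          have hc := Fintype.card_subtype_compl (fun v : V => v = z)
          rw [Fintype.card_subtype_eq] at hc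
          exact hc
        set r' : V' → V' → Prop := fun a b => r a.val b.val with hr'
        haveI : DecidableRel r' := fun a b => instr a.val b.val
        have IHres := IH (N - 1) (by omega) r' (fun v : V' => f v.val) hcard'
          (fun u v huv => hmono _ _ huv) (fun a b c h1 h2 => htrans _ _ _ h1 h2)
          (fun a b u v h1 h2 h3 h4 => by
            rcases hdia a.val b.val u.val v.val h1 h2 h3 h4 with hh | hh | hh
            · exact Or.inl (Subtype.ext hh)
            · exact Or.inr (Or.inl hh)
            · exact Or.inr (Or.inr hh))
          h0 (d0 - 1)
          (fun L hL => by
            have hmap : (L.map Subtype.val).Chain' r := (List.isChain_map _).mpr hL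
            have hb := hallch _ hmap
            simpa using hb)
          (by omega)
        set A := (Finset.univ.filter fun p : V × V => r p.1 p.2).filter
            (fun p => p.1 = z ∨ p.2 = z) with hA
        set B := (Finset.univ.filter fun p : V × V => r p.1 p.2).filter
            (fun p => ¬(p.1 = z ∨ p.2 = z)) with hB
        have hAB : A.card + B.card = cp := by
          rw [hA, hB, hcp]
          exact Finset.card_filter_add_card_filter_not _
        have hAle : A.card ≤ (Finset.univ.filter fun y => r z y ∨ r y z).card := by
          apply Finset.card_le_card_of_injOn (fun p => if p.1 = z then p.2 else p.1)
          · intro p hp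
            simp only [Finset.mem_coe, hA, Finset.mem_filter] at hp
            obtain ⟨⟨_, hr⟩, hz'⟩ := hp
            rw [Finset.mem_coe, Finset.mem_filter]
            refine ⟨Finset.mem_univ _, ?_⟩
            by_cases h1 : p.1 = z
            · simp only [if_pos h1]
              rw [h1] at hr
              exact Or.inl hr
            · simp only [if_neg h1]
              rcases hz' with h2 | h2
              · exact absurd h2 h1
              · rw [h2] at hr
                exact Or.inr hr
          · intro p hp q hq hpq
            dsimp only at hpq
            rw [Finset.mem_coe, hA, Finset.mem_filter, Finset.mem_filter] at hp hq
            obtain ⟨⟨_, hrp⟩, hzp⟩ := hp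
            obtain ⟨⟨_, hrq⟩, hzq⟩ := hq
            by_cases h1 : p.1 = z <;> by_cases h2 : q.1 = z
            · rw [if_pos h1, if_pos h2] at hpq
              exact Prod.ext (h1.trans h2.symm) hpq
            · rw [if_pos h1, if_neg h2] at hpq
              have hq2 : q.2 = z := by tauto
              rw [h1] at hrp
              rw [hq2] at hrq
              rw [hpq] at hrp
              exact absurd (htrans _ _ _ hrp hrq) (hirr z)
            · rw [if_neg h1, if_pos h2] at hpq
              have hp2 : p.2 = z := by tauto
              rw [h2] at hrq
              rw [hp2] at hrp
              rw [hpq] at hrp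
              exact absurd (htrans _ _ _ hrq hrp) (hirr z)
            · rw [if_neg h1, if_neg h2] at hpq
              have hp2 : p.2 = z := by tauto
              have hq2 : q.2 = z := by tauto
              exact Prod.ext hpq (hp2.trans hq2.symm)
        have hBle : B.card ≤ (Finset.univ.filter fun p : V' × V' => r' p.1 p.2).card := by
          apply Finset.card_le_card_of_surjOn (fun q : V' × V' => (q.1.val, q.2.val))
          intro p hp
          rw [Finset.mem_coe, hB, Finset.mem_filter, Finset.mem_filter] at hp
          obtain ⟨⟨_, hrp⟩, hzp⟩ := hp
          push_neg at hzp
          refine ⟨(⟨p.1, hzp.1⟩, ⟨p.2, hzp.2⟩), ?_, rfl⟩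
          rw [Finset.mem_coe]
          show _ ∈ Finset.univ.filter fun q : V' × V' => r' q.1 q.2
          exact Finset.mem_filter.mpr ⟨Finset.mem_univ _, hrp⟩
        have hQs : srQ (d0 + 2) = srQ (d0 + 1) + (d0 + 1) / 2 := by
          rw [show d0 + 2 = (d0 + 1) + 1 by omega]
          exact srQ_step (d0 + 1)
        have hd01 : d0 - 1 + 2 = d0 + 1 := by omega
        rw [hd01] at IHres
        have hch2 : N.choose 2 = (N - 1) + (N - 1).choose 2 := by
          have hsc := srChooseSucc (N - 1)
          rw [show N - 1 + 1 = N by omega] at hsc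
          exact hsc
        omega
    rcases hcontra with hc | hc
    · apply hremove c0
      rw [hdegc0]
      exact hc
    · apply hremove ct
      rw [hdegct]
      exact hc

end Poset

/-! ### Turán graph edge count -/

lemma srRangeCount (k : ℕ) :
    ((Finset.range k).filter fun x => x % 2 = 0).card = (k + 1) / 2 ∧
    ((Finset.range k).filter fun x => ¬x % 2 = 0).card = k / 2 := by
  induction k with
  | zero => simp
  | succ m ih =>
    rw [Finset.range_add_one, Finset.filter_insert, Finset.filter_insert]
    by_cases hm : m % 2 = 0
    · rw [if_pos hm, if_neg (by simp [hm])]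
      rw [Finset.card_insert_of_notMem (by simp)]
      omega
    · rw [if_neg hm, if_pos hm]
      rw [Finset.card_insert_of_notMem (by simp)]
      omega

lemma srFinCount (k : ℕ) (p : ℕ → Prop) [DecidablePred p] :
    ((Finset.univ : Finset (Fin k)).filter fun v => p v.val).card =
    ((Finset.range k).filter p).card := by
  apply Finset.card_bij (fun a _ => a.val)
  · intro a ha
    rw [Finset.mem_filter] at ha
    exact Finset.mem_filter.mpr ⟨Finset.mem_range.mpr a.isLt, ha.2⟩
  · intro a _ b _ hab
    exact Fin.ext hab
  · intro b hb
    rw [Finset.mem_filter, Finset.mem_range] at hb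
    exact ⟨⟨b, hb.1⟩, Finset.mem_filter.mpr ⟨Finset.mem_univ _, hb.2⟩, rfl⟩

lemma srTuranCount (k : ℕ) : turanEdges k 2 = srT k := by
  have hdeg : ∀ v : Fin k, (SimpleGraph.turanGraph k 2).degree v =
      (if (v : ℕ) % 2 = 0 then k / 2 else (k + 1) / 2) := by
    intro v
    rw [SimpleGraph.degree, SimpleGraph.neighborFinset_eq_filter]
    have hadj : ∀ w : Fin k, (SimpleGraph.turanGraph k 2).Adj v w ↔
        ¬((w : ℕ) % 2 = (v : ℕ) % 2) := by
      intro w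
      constructor
      · intro h hh; exact h hh.symm
      · intro h hh; exact h hh.symm
    by_cases hv : (v : ℕ) % 2 = 0
    · rw [if_pos hv]
      have : (Finset.univ.filter fun w => (SimpleGraph.turanGraph k 2).Adj v w) =
          (Finset.univ.filter fun w : Fin k => ¬(w : ℕ) % 2 = 0) := by
        apply Finset.filter_congr
        intro w _
        rw [hadj w, hv]
      rw [this, srFinCount k (fun x => ¬x % 2 = 0)]
      exact (srRangeCount k).2
    · rw [if_neg hv]
      have hv1 : (v : ℕ) % 2 = 1 := by omega
      have : (Finset.univ.filter fun w => (SimpleGraph.turanGraph k 2).Adj v w) =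
          (Finset.univ.filter fun w : Fin k => (w : ℕ) % 2 = 0) := by
        apply Finset.filter_congr
        intro w _
        rw [hadj w, hv1]
        constructor
        · intro h; omega
        · intro h; omega
      rw [this, srFinCount k (fun x => x % 2 = 0)]
      exact (srRangeCount k).1
  have hsum := SimpleGraph.sum_degrees_eq_twice_card_edges (SimpleGraph.turanGraph k 2)
  have hsplit : ∑ v : Fin k, (SimpleGraph.turanGraph k 2).degree v =
      ((k + 1) / 2) * (k / 2) + (k / 2) * ((k + 1) / 2) := by
    rw [← Finset.sum_filter_add_sum_filter_not Finset.univ (fun v : Fin k => (v : ℕ) % 2 = 0)]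
    have h1 : ∀ v ∈ Finset.univ.filter (fun v : Fin k => (v : ℕ) % 2 = 0),
        (SimpleGraph.turanGraph k 2).degree v = k / 2 := by
      intro v hv
      rw [Finset.mem_filter] at hv
      rw [hdeg v, if_pos hv.2]
    have h2 : ∀ v ∈ Finset.univ.filter (fun v : Fin k => ¬(v : ℕ) % 2 = 0),
        (SimpleGraph.turanGraph k 2).degree v = (k + 1) / 2 := by
      intro v hv
      rw [Finset.mem_filter] at hv
      rw [hdeg v, if_neg hv.2]
    rw [Finset.sum_congr rfl h1, Finset.sum_congr rfl h2]
    rw [Finset.sum_const, Finset.sum_const, smul_eq_mul, smul_eq_mul]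
    rw [srFinCount k (fun x => x % 2 = 0), srFinCount k (fun x => ¬x % 2 = 0)]
    rw [(srRangeCount k).1, (srRangeCount k).2]
  rw [hsplit] at hsum
  have hT : srT k = (k / 2) * ((k + 1) / 2) := rfl
  have : 2 * turanEdges k 2 = 2 * srT k := by
    rw [turanEdges, ← hsum, hT]
    ring
  omega

/-! ### Main theorem -/

theorem stronglyReduced_edge_bound {V : Type*} [Fintype V] (E : V → V → Prop) (n ℓ : ℕ)
    (hcard : Fintype.card V = n)
    (hacyc : ∀ v : V, ¬Relation.TransGen E v v)
    (hℓ : 1 ≤ ℓ)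
    (hlong : ∃ p : Fin (ℓ + 1) → V, IsDirPath E ℓ p)
    (hmax : ¬∃ p : Fin (ℓ + 1 + 1) → V, IsDirPath E (ℓ + 1) p)
    (hsr : StronglyReduced E) :
    edgeCount E ≤ turanEdges (n - ℓ + 1) 2 + intervalTuran n ℓ := by
  classical
  obtain ⟨p, hp⟩ := hlong
  have hstep : ∀ (j : ℕ) (hj : j < ℓ + 1) (i : ℕ) (hij : i < j),
      TransGen E (p ⟨i, by omega⟩) (p ⟨j, hj⟩) := by
    intro j
    induction j with
    | zero => intro _ i hi; omega
    | succ j ihj =>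
      intro hj i hi
      have hE : E (p ⟨j, by omega⟩) (p ⟨j + 1, hj⟩) := hp ⟨j, by omega⟩
      rcases Nat.lt_or_ge i j with hij | hij
      · exact (ihj (by omega) i hij).tail hE
      · have hij' : i = j := by omega
        subst hij'
        exact TransGen.single hE
  have hpinj : Function.Injective p := by
    intro i j hij
    by_contra hne
    have hne' : i.val ≠ j.val := fun hh => hne (Fin.ext hh)
    rcases Nat.lt_or_ge i.val j.val with hh | hh
    · have ht := hstep j.val j.isLt i.val hh
      simp only [Fin.eta] at ht
      rw [hij] at ht
      exact hacyc _ ht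
    · have hh2 : j.val < i.val := by omega
      have ht := hstep i.val i.isLt j.val hh2
      simp only [Fin.eta] at ht
      rw [hij] at ht
      exact hacyc _ ht
  have hn : ℓ + 1 ≤ n := by
    rw [← hcard]
    have := Fintype.card_le_of_injective p hpinj
    simpa using this
  obtain ⟨f, hftopo⟩ := srTopo hacyc
  have hmono : ∀ u v, TransGen E u v → f u < f v := by
    intro u v huv
    induction huv with
    | single h => exact hftopo.2 _ _ h
    | tail _ h ih => exact ih.trans (hftopo.2 _ _ h)
  have hchain := srChainLen hacyc hmax
  haveI : DecidableRel (Relation.TransGen E) := Classical.decRel _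
  have hposet := srPoset n (Relation.TransGen E) f hcard hmono
    (fun a b c h1 h2 => h1.trans h2)
    (fun a b u v h1 h2 h3 h4 => srDiamond hacyc hsr h1 h3 h2 h4)
    (ℓ + 1) (n - (ℓ + 1)) hchain (by omega)
  have hEsub : edgeCount E ≤
      (Finset.univ.filter fun q : V × V => Relation.TransGen E q.1 q.2).card := by
    have he : edgeCount E = (Finset.univ.filter fun q : V × V => E q.1 q.2).card := by
      unfold edgeCount
      congr 1
    rw [he]
    apply Finset.card_le_card
    intro q hq
    rw [Finset.mem_filter] at hq ⊢
    exact ⟨hq.1, TransGen.single hq.2⟩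
  have hturan := srTuranCount (n - ℓ + 1)
  have hQT := srQ_add_srT (n - ℓ + 1)
  have hCle : Nat.choose (n - ℓ + 1) 2 ≤ Nat.choose n 2 := Nat.choose_le_choose 2 (by omega)
  have hm : n - ℓ + 1 = (n - (ℓ + 1)) + 2 := by omega
  rw [intervalTuran]
  rw [hm] at hturan hQT hCle ⊢
  omega
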